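/- Let {ε_n}_{n≥1} be a strictly decreasing sequence in (0,1) with ε_n → 0 such that {1 - ε_n} is a thin Blaschke sequence (lim_{m→∞} ∏_{n ≠ m} d(1 - ε_n, 1 - ε_m) = 1), and let B(z) = ∏_{n=1}^∞ ((1 - ε_n) - z)/(1 - (1 - ε_n)·z) be the Blaschke product with zeros 1 - ε_n. Then for every real θ₁ with 0 < |θ₁| < π/2, liminf_{m→∞} |B(1 - ε_m·e^{iθ₁})| > 0. -/

import Mathlib

open Complex Filter Metric

/-- The pseudohyperbolic distance `d(z,w) = |z - w| / |1 - conj z * w|` on the unit disk. -/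
noncomputable def pd (z w : ℂ) : ℝ :=
  ‖z - w‖ / ‖1 - (starRingEnd ℂ) z * w‖

/-- The Blaschke product with zeros `1 - ε_n ∈ (0,1)`:
`B(z) = ∏_{n=1}^∞ ((1 - ε_n) - z)/(1 - (1 - ε_n) z)`. -/
noncomputable def B (ε : ℕ → ℝ) (z : ℂ) : ℂ :=
  ∏' n : ℕ, (((1 - ε n : ℝ) : ℂ) - z) / (1 - ((1 - ε n : ℝ) : ℂ) * z)

lemma pd_nonneg (z w : ℂ) : 0 ≤ pd z w := by
  unfold pd; positivity

lemma pd_sq (z w : ℂ) : pd z w ^ 2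
    = Complex.normSq (z - w) / Complex.normSq (1 - (starRingEnd ℂ) z * w) := by
  unfold pd
  rw [div_pow, Complex.sq_norm, Complex.sq_norm]

lemma exp_I_theta (θ : ℝ) : Complex.exp (Complex.I * θ)
    = ((Real.cos θ : ℝ) : ℂ) + ((Real.sin θ : ℝ) : ℂ) * Complex.I := by
  rw [mul_comm, Complex.exp_mul_I]
  simp [← Complex.ofReal_cos, ← Complex.ofReal_sin]

lemma pd_real_z_sq' (a b c s : ℝ) (e : ℂ) (he : e = (c:ℂ) + (s:ℂ) * Complex.I)
    (hsc : s^2 + c^2 = 1) :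
    pd (1 - (a:ℂ)) (1 - (b:ℂ) * e) ^ 2
      = (b^2 - 2*a*b*c + a^2)
        / (a^2 + 2*(1-a)*a*b*c + (1-a)^2*b^2) := by
  rw [pd_sq]
  have h1 : (1 - (a:ℂ)) - (1 - (b:ℂ) * e)
      = ((b*c - a : ℝ) : ℂ) + ((b*s : ℝ) : ℂ) * Complex.I := by
    rw [he]; push_cast; ring
  have h2 : (1:ℂ) - (starRingEnd ℂ) (1 - (a:ℂ)) * (1 - (b:ℂ) * e)
      = ((a + (1-a)*b*c : ℝ) : ℂ) + (((1-a)*b*s : ℝ) : ℂ) * Complex.I := by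
    simp only [map_sub, map_one, Complex.conj_ofReal]
    rw [he]; push_cast; ring
  rw [h1, h2, Complex.normSq_add_mul_I, Complex.normSq_add_mul_I]
  congr 1
  · linear_combination b^2 * hsc
  · linear_combination ((1-a)*b)^2 * hsc

lemma pd_real_z_sq (a b θ : ℝ) :
    pd (1 - (a:ℂ)) (1 - (b:ℂ) * Complex.exp (Complex.I * θ)) ^ 2
      = (b^2 - 2*a*b*Real.cos θ + a^2)
        / (a^2 + 2*(1-a)*a*b*Real.cos θ + (1-a)^2*b^2) :=
  pd_real_z_sq' a b _ _ _ (exp_I_theta θ) (Real.sin_sq_add_cos_sq θ)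

lemma pd_real_sq (a b : ℝ) :
    pd (1 - (a:ℂ)) (1 - (b:ℂ)) ^ 2 = (a-b)^2/(a+b-a*b)^2 := by
  have h := pd_real_z_sq' a b 1 0 1 (by simp) (by norm_num)
  rw [mul_one] at h
  rw [h]
  congr 1 <;> ring

lemma sq_le_imp (a b : ℝ) (ha : 0 ≤ a) (hb : 0 ≤ b) (h : a^2 ≤ b^2) : a ≤ b := by
  nlinarith

lemma smm_lb (b θ : ℝ) (hb : 0 < b) (hb1 : b < 1) (hc : 0 < Real.cos θ) :
    |Real.sin θ| / 2 ≤ pd (1 - (b:ℂ)) (1 - (b:ℂ) * Complex.exp (Complex.I * θ)) := by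
  have hc1 : Real.cos θ ≤ 1 := Real.cos_le_one θ
  set c := Real.cos θ with hcdef
  have hsq := pd_real_z_sq b b θ
  rw [← hcdef] at hsq
  have hD : (0:ℝ) < b^2 + 2*(1-b)*b*b*c + (1-b)^2*b^2 := by
    have h1 : (0:ℝ) < b^2 := by positivity
    have h2 : (0:ℝ) ≤ 2*(1-b)*b*b*c := by
      have : (0:ℝ) ≤ 1-b := by linarith
      positivity
    have h3 : (0:ℝ) ≤ (1-b)^2*b^2 := by positivity
    linarith
  apply sq_le_imp _ _ (by positivity) (pd_nonneg _ _)
  rw [hsq]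
  rw [div_pow, div_le_div_iff₀ (by norm_num) hD]
  have hs2 : Real.sin θ ^2 = 1 - c^2 := by
    have := Real.sin_sq_add_cos_sq θ
    rw [← hcdef] at this; linarith
  have habs : |Real.sin θ|^2 = Real.sin θ ^2 := sq_abs _
  rw [habs, hs2]
  nlinarith [sq_nonneg (1-b), sq_nonneg b, mul_pos hb hb,
    mul_nonneg (mul_nonneg (by linarith : (0:ℝ) ≤ 1-c) (by linarith : (0:ℝ) ≤ 1-c)) (sq_nonneg b),
    mul_nonneg (mul_nonneg (by linarith : (0:ℝ) ≤ 1-c) (by linarith : (0:ℝ) ≤ c)) (sq_nonneg b),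
    mul_nonneg (mul_nonneg (by linarith : (0:ℝ) ≤ 1-c) (by linarith : (0:ℝ) ≤ 1-b)) (mul_pos hb hb).le,
    mul_nonneg (mul_nonneg (mul_nonneg (by linarith : (0:ℝ) ≤ 1-c) (by linarith : (0:ℝ) ≤ 1-b)) (by linarith : (0:ℝ) ≤ c)) (mul_pos hb hb).le]

lemma key_ineq (a b c : ℝ) (ha : 0<a) (ha1 : a<1) (hb : 0<b) (hb1 : b<1)
    (hc : 0<c) (hc1 : c≤1) (hbc : b ≤ c) :
    c * (1 - (b^2-2*a*b*c+a^2)/(a^2+2*(1-a)*a*b*c+(1-a)^2*b^2))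
      ≤ 1 - (a-b)^2/(a+b-a*b)^2 := by
  have t1 : (0:ℝ) < a^2 := by positivity
  have t2 : (0:ℝ) ≤ 2*(1-a)*a*b*c := by
    have : (0:ℝ) ≤ 1-a := by linarith
    positivity
  have t3 : (0:ℝ) ≤ (1-a)^2*b^2 := by positivity
  have hD : (0:ℝ) < a^2+2*(1-a)*a*b*c+(1-a)^2*b^2 := by linarith
  have hd : (0:ℝ) < a+b-a*b := by nlinarith [mul_pos ha (by linarith : (0:ℝ) < 1-b)]
  have hD0 : (0:ℝ) < (a+b-a*b)^2 := by positivity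
  have e1 : c * (1 - (b^2-2*a*b*c+a^2)/(a^2+2*(1-a)*a*b*c+(1-a)^2*b^2))
      = (c*(a*b*(2-a)*(2*c-b)))/(a^2+2*(1-a)*a*b*c+(1-a)^2*b^2) := by
    rw [mul_sub, mul_one, mul_div_assoc', eq_div_iff hD.ne', sub_mul, div_mul_cancel₀ _ hD.ne']
    ring
  have e2 : 1 - (a-b)^2/(a+b-a*b)^2 = (a*b*(2-a)*(2-b))/((a+b-a*b)^2) := by
    field_simp
    ring
  rw [e1, e2, div_le_div_iff₀ hD hD0]
  have hid : a*b*(2-a)*(2-b)*(a^2+2*(1-a)*a*b*c+(1-a)^2*b^2)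
        - c*(a*b*(2-a)*(2*c-b))*((a+b-a*b)^2)
      = a*b*(2-a)*((2-b)*(1-c)*(a^2+(1-a)^2*b^2) + 2*c*(1-c)*(a+b-a*b)^2) := by
    ring
  have hnn : (0:ℝ) ≤ a*b*(2-a)*((2-b)*(1-c)*(a^2+(1-a)^2*b^2) + 2*c*(1-c)*(a+b-a*b)^2) := by
    have h1 : (0:ℝ) ≤ 2-b := by linarith
    have h2 : (0:ℝ) ≤ 1-c := by linarith
    have h3 : (0:ℝ) ≤ 2-a := by linarith
    positivity
  linarith

lemma t_gap (a b A : ℝ) (ha:0<a)(ha1:a<1)(hb:0<b)(hb1:b<1)(hA : a ≤ A) :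
    a * (b/(A+b)^2) ≤ 1 - (a-b)^2/(a+b-a*b)^2 := by
  have hd : (0:ℝ) < a + b - a*b := by nlinarith [mul_pos ha (by linarith : (0:ℝ) < 1-b)]
  have hD0 : (0:ℝ) < (a+b-a*b)^2 := by positivity
  have hAb : (0:ℝ) < (A+b)^2 := by nlinarith
  have e2 : 1 - (a-b)^2/((a+b-a*b)^2) = (a*b*(2-a)*(2-b))/((a+b-a*b)^2) := by
    field_simp; ring
  rw [e2, mul_div_assoc' a b _, div_le_div_iff₀ hAb hD0]
  have h1 : (a+b-a*b)^2 ≤ (A+b)^2 := by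
    apply pow_le_pow_left₀ hd.le
    nlinarith [mul_pos ha hb]
  have h2 : a*b ≤ a*b*(2-a)*(2-b) := by
    nlinarith [mul_nonneg (mul_nonneg (by linarith:(0:ℝ)≤1-a) (by linarith:(0:ℝ)≤1-b)) (mul_pos ha hb).le,
      mul_nonneg (mul_pos ha hb).le (by linarith : (0:ℝ) ≤ 2-a-b)]
  calc a*b*(a+b-a*b)^2 ≤ a*b*(A+b)^2 := by
        have := mul_le_mul_of_nonneg_left h1 (mul_pos ha hb).le
        linarith
    _ ≤ a*b*(2-a)*(2-b)*(A+b)^2 := mul_le_mul_of_nonneg_right h2 hAb.le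

lemma hasProd01 {ι : Type*} (f : ι → ℝ) (h0 : ∀ i, 0 ≤ f i) (h1 : ∀ i, f i ≤ 1) :
    HasProd f (⨅ F : Finset ι, ∏ i ∈ F, f i) := by
  classical
  have hanti : Antitone (fun F : Finset ι => ∏ i ∈ F, f i) := by
    intro F F' h
    have := Finset.prod_sdiff h (f := f)
    have hle1 : ∏ i ∈ F' \ F, f i ≤ 1 :=
      Finset.prod_le_one (fun i _ => h0 i) (fun i _ => h1 i)
    have hnn : 0 ≤ ∏ i ∈ F, f i := Finset.prod_nonneg (fun i _ => h0 i)
    calc ∏ i ∈ F', f i = (∏ i ∈ F' \ F, f i) * ∏ i ∈ F, f i := this.symm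
      _ ≤ 1 * ∏ i ∈ F, f i := by
          exact mul_le_mul_of_nonneg_right hle1 hnn
      _ = ∏ i ∈ F, f i := one_mul _
  have hbdd : BddBelow (Set.range (fun F : Finset ι => ∏ i ∈ F, f i)) := by
    refine ⟨0, ?_⟩
    rintro x ⟨F, rfl⟩
    exact Finset.prod_nonneg (fun i _ => h0 i)
  exact tendsto_atTop_ciInf hanti hbdd

lemma tprod01_le_prod {ι : Type*} (f : ι → ℝ) (h0 : ∀ i, 0 ≤ f i) (h1 : ∀ i, f i ≤ 1)
    (F : Finset ι) : ∏' i, f i ≤ ∏ i ∈ F, f i := by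
  rw [(hasProd01 f h0 h1).tprod_eq]
  exact ciInf_le ⟨0, by rintro x ⟨G, rfl⟩; exact Finset.prod_nonneg (fun i _ => h0 i)⟩ F

lemma le_tprod01 {ι : Type*} (f : ι → ℝ) (h0 : ∀ i, 0 ≤ f i) (h1 : ∀ i, f i ≤ 1)
    (δ : ℝ) (h : ∀ F : Finset ι, δ ≤ ∏ i ∈ F, f i) : δ ≤ ∏' i, f i := by
  rw [(hasProd01 f h0 h1).tprod_eq]
  exact le_ciInf h

lemma weier {ι : Type*} (F : Finset ι) (u : ι → ℝ) (h0 : ∀ i ∈ F, 0 ≤ u i)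
    (h1 : ∀ i ∈ F, u i ≤ 1) :
    1 - ∑ i ∈ F, u i ≤ ∏ i ∈ F, (1 - u i) := by
  classical
  induction F using Finset.cons_induction with
  | empty => simp
  | cons a F ha ih =>
    rw [Finset.prod_cons, Finset.sum_cons]
    have h0' : ∀ i ∈ F, 0 ≤ u i := fun i hi => h0 i (Finset.mem_cons_of_mem hi)
    have h1' : ∀ i ∈ F, u i ≤ 1 := fun i hi => h1 i (Finset.mem_cons_of_mem hi)
    have ih' := ih h0' h1'
    have hnn : 0 ≤ ∏ i ∈ F, (1 - u i) :=
      Finset.prod_nonneg (fun i hi => by linarith [h1' i hi])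
    have hsum : 0 ≤ ∑ i ∈ F, u i := Finset.sum_nonneg (fun i hi => h0' i hi)
    have h0a := h0 a (Finset.mem_cons_self a F)
    have h1a := h1 a (Finset.mem_cons_self a F)
    nlinarith [mul_le_mul_of_nonneg_left ih' (by linarith : 0 ≤ 1 - u a)]

set_option maxHeartbeats 1000000 in
/-- If `ε_n` decreases strictly to `0` in `(0,1)`, `{1 - ε_n}` is a thin Blaschke
sequence, and `B` is the Blaschke product with zeros `1 - ε_n`, then for every `θ₁`
with `0 < |θ₁| < π/2`, `liminf_{m→∞} |B(1 - ε_m e^{iθ₁})| > 0`. -/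
theorem stmt9 (ε : ℕ → ℝ) (hdec : StrictAnti ε) (hmem : ∀ n, ε n ∈ Set.Ioo (0 : ℝ) 1)
    (hlim : Tendsto ε atTop (nhds 0))
    (hthin : Tendsto (fun m : ℕ =>
      ∏' n : {n : ℕ // n ≠ m}, pd (1 - (ε (n : ℕ) : ℂ)) (1 - (ε m : ℂ))) atTop (nhds 1))
    (θ₁ : ℝ) (h1 : 0 < |θ₁|) (h2 : |θ₁| < Real.pi / 2) :
    0 < Filter.liminf (fun m : ℕ =>
      ‖B ε (1 - (ε m : ℂ) * Complex.exp (Complex.I * θ₁))‖) atTop := by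
  classical
  obtain ⟨hθl, hθr⟩ := abs_lt.mp h2
  have hε0 : ∀ n, 0 < ε n := fun n => (hmem n).1
  have hε1 : ∀ n, ε n < 1 := fun n => (hmem n).2
  have hc : 0 < Real.cos θ₁ := Real.cos_pos_of_mem_Ioo ⟨hθl, hθr⟩
  have hc1 : Real.cos θ₁ ≤ 1 := Real.cos_le_one θ₁
  have hsin : 0 < |Real.sin θ₁| := by
    have hne : θ₁ ≠ 0 := by
      intro h; rw [h] at h1; simp at h1
    rcases hne.lt_or_gt with h | h
    · have hpi : -Real.pi < θ₁ := by linarith [Real.pi_pos, Real.pi_gt_three]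
      have : Real.sin θ₁ < 0 := Real.sin_neg_of_neg_of_neg_pi_lt h hpi
      exact abs_pos.mpr (ne_of_lt this)
    · have : 0 < Real.sin θ₁ :=
        Real.sin_pos_of_pos_of_lt_pi h (by linarith [Real.pi_pos])
      exact abs_pos.mpr (ne_of_gt this)
  -- facts about t n m := pd (1 - ε n) (1 - ε m)
  have hden_pos : ∀ n m : ℕ, 0 < ε n + ε m - ε n * ε m := by
    intro n m
    nlinarith [mul_pos (hε0 n) (by linarith [hε1 m] : (0:ℝ) < 1 - ε m), hε0 m]
  have ht_sq : ∀ n m : ℕ, pd (1 - (ε n : ℂ)) (1 - (ε m : ℂ)) ^ 2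
      = (ε n - ε m)^2/(ε n + ε m - ε n*ε m)^2 := fun n m => pd_real_sq (ε n) (ε m)
  have ht_le_one : ∀ n m : ℕ, pd (1 - (ε n : ℂ)) (1 - (ε m : ℂ)) ≤ 1 := by
    intro n m
    apply sq_le_imp _ _ (pd_nonneg _ _) zero_le_one
    rw [one_pow, ht_sq n m]
    rw [div_le_one (pow_pos (hden_pos n m) 2)]
    nlinarith [mul_pos (hε0 n) (hε0 m), hε1 n, hε1 m,
      mul_nonneg (mul_nonneg (mul_pos (hε0 n) (hε0 m)).le
        (by linarith [hε1 n] : (0:ℝ) ≤ 2 - ε n)) (by linarith [hε1 m] : (0:ℝ) ≤ 2 - ε m),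
      mul_nonneg (mul_pos (hε0 n) (hε0 m)).le (by linarith [hε1 n, hε1 m] : (0:ℝ) ≤ 2 - ε n - ε m)]
  have ht_pos : ∀ n m : ℕ, n ≠ m → 0 < pd (1 - (ε n : ℂ)) (1 - (ε m : ℂ)) := by
    intro n m hnm
    rcases (pd_nonneg (1 - (ε n : ℂ)) (1 - (ε m : ℂ))).eq_or_lt with h | h
    · exfalso
      have hsq : pd (1 - (ε n : ℂ)) (1 - (ε m : ℂ)) ^ 2 = 0 := by rw [← h]; ring
      rw [ht_sq n m] at hsq
      have hne : ε n - ε m ≠ 0 := sub_ne_zero.mpr (hdec.injective.ne hnm)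
      have hd := hden_pos n m
      rcases div_eq_zero_iff.mp hsq with h' | h'
      · exact hne (pow_eq_zero_iff (by norm_num) |>.mp h')
      · exact absurd h' (ne_of_gt (pow_pos hd 2))
    · exact h
  -- the tail products
  set P : ℕ → ℝ := fun m =>
    ∏' n : {n : ℕ // n ≠ m}, pd (1 - (ε (n : ℕ) : ℂ)) (1 - (ε m : ℂ)) with hPdef
  have hP_le_prod : ∀ (m : ℕ) (F : Finset {n : ℕ // n ≠ m}),
      P m ≤ ∏ n ∈ F, pd (1 - (ε (n : ℕ) : ℂ)) (1 - (ε m : ℂ)) := by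
    intro m F
    exact tprod01_le_prod _ (fun n => pd_nonneg _ _) (fun n => ht_le_one _ _) F
  have hP_le_fin : ∀ (m : ℕ) (F : Finset ℕ), m ∉ F →
      P m ≤ ∏ n ∈ F, pd (1 - (ε n : ℂ)) (1 - (ε m : ℂ)) := by
    intro m F hmF
    have h := hP_le_prod m (F.subtype (· ≠ m))
    exact h.trans_eq (Finset.prod_subtype_of_mem (fun n : ℕ => pd (1 - (ε n : ℂ)) (1 - (ε m : ℂ))) (fun x hx => ne_of_mem_of_not_mem hx hmF))
  -- the log-sum bound
  have hclaim : ∀ (m : ℕ) (q : ℝ), 0 < q → q ≤ P m → ∀ F : Finset ℕ, m ∉ F →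
      ∑ n ∈ F, (1 - pd (1 - (ε n : ℂ)) (1 - (ε m : ℂ))^2) ≤ -2 * Real.log q := by
    intro m q hq hqP F hmF
    have hne0 : ∀ n ∈ F, pd (1 - (ε n : ℂ)) (1 - (ε m : ℂ)) ≠ 0 :=
      fun n hn => ne_of_gt (ht_pos n m (ne_of_mem_of_not_mem hn hmF))
    have hstep : ∀ n ∈ F, 1 - pd (1 - (ε n : ℂ)) (1 - (ε m : ℂ))^2
        ≤ 2 * (-Real.log (pd (1 - (ε n : ℂ)) (1 - (ε m : ℂ)))) := by
      intro n hn
      have hp := ht_pos n m (ne_of_mem_of_not_mem hn hmF)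
      have hl := Real.log_le_sub_one_of_pos hp
      have hle := ht_le_one n m
      nlinarith
    calc ∑ n ∈ F, (1 - pd (1 - (ε n : ℂ)) (1 - (ε m : ℂ))^2)
        ≤ ∑ n ∈ F, 2 * (-Real.log (pd (1 - (ε n : ℂ)) (1 - (ε m : ℂ)))) :=
          Finset.sum_le_sum hstep
      _ = -2 * Real.log (∏ n ∈ F, pd (1 - (ε n : ℂ)) (1 - (ε m : ℂ))) := by
          rw [Real.log_prod hne0, Finset.mul_sum]
          exact Finset.sum_congr rfl (fun n _ => by ring)
      _ ≤ -2 * Real.log q := by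
          have hlog : Real.log q ≤ Real.log (∏ n ∈ F, pd (1 - (ε n : ℂ)) (1 - (ε m : ℂ))) :=
            Real.log_le_log hq (le_trans hqP (hP_le_fin m F hmF))
          linarith
  -- summability of ε
  have hsumε : Summable ε := by
    obtain ⟨m₀, hm₀⟩ := (hthin.eventually (eventually_ge_nhds (by norm_num : (1:ℝ)/2 < 1))).exists
    have hC : (0:ℝ) < ε m₀/(ε 0 + ε m₀)^2 := by
      have := hε0 0; have := hε0 m₀; positivity
    apply summable_of_sum_le (fun n => (hε0 n).le)
    intro F
    refine le_trans ?_ (le_refl (ε m₀ + (-2 * Real.log (1/2))/(ε m₀/(ε 0 + ε m₀)^2)))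
    have hkey : ∀ G : Finset ℕ, m₀ ∉ G → ∑ n ∈ G, ε n ≤ (-2 * Real.log (1/2))/(ε m₀/(ε 0 + ε m₀)^2) := by
      intro G hG
      have hgap : ∀ n ∈ G, ε n * (ε m₀/(ε 0 + ε m₀)^2)
          ≤ 1 - pd (1 - (ε n : ℂ)) (1 - (ε m₀ : ℂ))^2 := by
        intro n _
        have hA : ε n ≤ ε 0 := hdec.antitone (Nat.zero_le n)
        have := t_gap (ε n) (ε m₀) (ε 0) (hε0 n) (hε1 n) (hε0 m₀) (hε1 m₀) hA
        rw [← ht_sq n m₀] at this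
        linarith [this]
      have hsum : (∑ n ∈ G, ε n) * (ε m₀/(ε 0 + ε m₀)^2)
          ≤ -2 * Real.log (1/2) := by
        rw [Finset.sum_mul]
        exact le_trans (Finset.sum_le_sum hgap) (hclaim m₀ (1/2) (by norm_num) hm₀ G hG)
      rw [le_div_iff₀ hC]
      exact hsum
    by_cases hmF : m₀ ∈ F
    · calc ∑ n ∈ F, ε n = ε m₀ + ∑ n ∈ F.erase m₀, ε n := (Finset.add_sum_erase F ε hmF).symm
        _ ≤ ε m₀ + (-2 * Real.log (1/2))/(ε m₀/(ε 0 + ε m₀)^2) := by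
            have := hkey (F.erase m₀) (Finset.notMem_erase m₀ F)
            linarith
    · have := hkey F hmF
      linarith [hε0 m₀]
  -- the eventual lower bound
  set δ : ℝ := 3/4 * (|Real.sin θ₁|/2) with hδdef
  have hδ : 0 < δ := by positivity
  have hev : ∀ᶠ m in atTop,
      δ ≤ ‖B ε (1 - (ε m : ℂ) * Complex.exp (Complex.I * θ₁))‖
        ∧ ‖B ε (1 - (ε m : ℂ) * Complex.exp (Complex.I * θ₁))‖ ≤ 1 := by
    have hR1 : Real.exp (-(Real.cos θ₁/8)) < 1 := by
      rw [Real.exp_lt_one_iff]; linarith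
    have hev1 : ∀ᶠ m in atTop, ε m ≤ Real.cos θ₁ := hlim.eventually (eventually_le_nhds hc)
    have hev2 : ∀ᶠ m in atTop, Real.exp (-(Real.cos θ₁/8)) ≤ P m :=
      hthin.eventually (eventually_ge_nhds hR1)
    filter_upwards [hev1, hev2] with m hbm hPm
    -- facts about s n := pd (1 - ε n) (1 - ε m e^{iθ})
    have hs_sq : ∀ n, pd (1 - (ε n:ℂ)) (1 - (ε m:ℂ) * Complex.exp (Complex.I * θ₁)) ^2
        = ((ε m)^2 - 2*(ε n)*(ε m)*Real.cos θ₁ + (ε n)^2)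
          /((ε n)^2 + 2*(1-ε n)*(ε n)*(ε m)*Real.cos θ₁ + (1-ε n)^2*(ε m)^2) :=
      fun n => pd_real_z_sq (ε n) (ε m) θ₁
    have hDz : ∀ n, 0 < (ε n)^2 + 2*(1-ε n)*(ε n)*(ε m)*Real.cos θ₁ + (1-ε n)^2*(ε m)^2 := by
      intro n
      have h1 : (0:ℝ) < (ε n)^2 := pow_pos (hε0 n) 2
      have h2 : (0:ℝ) ≤ 2*(1-ε n)*(ε n)*(ε m)*Real.cos θ₁ :=
        mul_nonneg (mul_nonneg (mul_nonneg
          (by linarith [hε1 n] : (0:ℝ) ≤ 2*(1-ε n)) (hε0 n).le) (hε0 m).le) hc.le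
      have h3 : (0:ℝ) ≤ (1-ε n)^2*(ε m)^2 := by positivity
      linarith
    have hs_le_one : ∀ n, pd (1 - (ε n:ℂ)) (1 - (ε m:ℂ) * Complex.exp (Complex.I * θ₁)) ≤ 1 := by
      intro n
      apply sq_le_imp _ _ (pd_nonneg _ _) zero_le_one
      rw [one_pow, hs_sq n, div_le_one (hDz n)]
      nlinarith [mul_nonneg (mul_nonneg (mul_nonneg (hε0 n).le (hε0 m).le)
        (by linarith [hε1 n] : (0:ℝ) ≤ 2 - ε n)) (by linarith : (0:ℝ) ≤ 2*Real.cos θ₁ - ε m)]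
    have hkey2 : ∀ n, 1 - (1 - pd (1 - (ε n:ℂ)) (1 - (ε m:ℂ))^2)/Real.cos θ₁
        ≤ pd (1 - (ε n:ℂ)) (1 - (ε m:ℂ) * Complex.exp (Complex.I * θ₁))^2 := by
      intro n
      have hki := key_ineq (ε n) (ε m) (Real.cos θ₁) (hε0 n) (hε1 n) (hε0 m) (hε1 m) hc hc1 hbm
      rw [← ht_sq n m, ← hs_sq n] at hki
      have h' : 1 - pd (1 - (ε n:ℂ)) (1 - (ε m:ℂ) * Complex.exp (Complex.I * θ₁))^2
          ≤ (1 - pd (1 - (ε n:ℂ)) (1 - (ε m:ℂ))^2)/Real.cos θ₁ := by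
        rw [le_div_iff₀ hc]; nlinarith
      linarith
    have hu_sum : ∀ F : Finset ℕ, m ∉ F →
        ∑ n ∈ F, (1 - pd (1 - (ε n:ℂ)) (1 - (ε m:ℂ))^2)/Real.cos θ₁ ≤ 1/4 := by
      intro F hF
      have h := hclaim m (Real.exp (-(Real.cos θ₁/8))) (Real.exp_pos _) hPm F hF
      rw [Real.log_exp] at h
      rw [← Finset.sum_div, div_le_iff₀ hc]
      linarith
    have hu_nonneg : ∀ n, 0 ≤ (1 - pd (1 - (ε n:ℂ)) (1 - (ε m:ℂ))^2)/Real.cos θ₁ := by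
      intro n
      apply div_nonneg _ hc.le
      nlinarith [ht_le_one n m, pd_nonneg (1 - (ε n:ℂ)) (1 - (ε m:ℂ))]
    have hu_le_one : ∀ n, n ≠ m → (1 - pd (1 - (ε n:ℂ)) (1 - (ε m:ℂ))^2)/Real.cos θ₁ ≤ 1 := by
      intro n hn
      have h := hu_sum {n} (by simp [Ne.symm hn])
      simp only [Finset.sum_singleton] at h
      linarith
    -- finite product lower bound
    have hprod : ∀ F : Finset ℕ,
        δ ≤ ∏ n ∈ F, pd (1 - (ε n:ℂ)) (1 - (ε m:ℂ) * Complex.exp (Complex.I * θ₁)) := by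
      intro F
      have hmF' : m ∉ F.erase m := Finset.notMem_erase m F
      have hW : (3:ℝ)/4 ≤ ∏ n ∈ F.erase m, pd (1 - (ε n:ℂ)) (1 - (ε m:ℂ) * Complex.exp (Complex.I * θ₁)) := by
        have hw1 := weier (F.erase m) (fun n => (1 - pd (1 - (ε n:ℂ)) (1 - (ε m:ℂ))^2)/Real.cos θ₁)
          (fun i _ => hu_nonneg i) (fun i hi => hu_le_one i (ne_of_mem_of_not_mem hi hmF'))
        have hw2 : ∏ n ∈ F.erase m, (1 - (1 - pd (1 - (ε n:ℂ)) (1 - (ε m:ℂ))^2)/Real.cos θ₁)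
            ≤ ∏ n ∈ F.erase m, pd (1 - (ε n:ℂ)) (1 - (ε m:ℂ) * Complex.exp (Complex.I * θ₁))^2 :=
          Finset.prod_le_prod
            (fun i hi => by linarith [hu_le_one i (ne_of_mem_of_not_mem hi hmF')])
            (fun i _ => hkey2 i)
        have hw3 := hu_sum (F.erase m) hmF'
        have hw4 : ∏ n ∈ F.erase m, pd (1 - (ε n:ℂ)) (1 - (ε m:ℂ) * Complex.exp (Complex.I * θ₁))^2
            = (∏ n ∈ F.erase m, pd (1 - (ε n:ℂ)) (1 - (ε m:ℂ) * Complex.exp (Complex.I * θ₁)))^2 :=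
          Finset.prod_pow _ 2 _
        have hw5 : 0 ≤ ∏ n ∈ F.erase m, pd (1 - (ε n:ℂ)) (1 - (ε m:ℂ) * Complex.exp (Complex.I * θ₁)) :=
          Finset.prod_nonneg (fun i _ => pd_nonneg _ _)
        have hw6 : ∏ n ∈ F.erase m, pd (1 - (ε n:ℂ)) (1 - (ε m:ℂ) * Complex.exp (Complex.I * θ₁)) ≤ 1 :=
          Finset.prod_le_one (fun i _ => pd_nonneg _ _) (fun i _ => hs_le_one i)
        nlinarith [hw1, hw2, hw3, hw5, hw6, mul_nonneg hw5 (by linarith :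
          0 ≤ 1 - ∏ n ∈ F.erase m, pd (1 - (ε n:ℂ)) (1 - (ε m:ℂ) * Complex.exp (Complex.I * θ₁)))]
      by_cases hmF : m ∈ F
      · rw [← Finset.mul_prod_erase F _ hmF]
        have hsmm := smm_lb (ε m) θ₁ (hε0 m) (hε1 m) hc
        have h0 : 0 ≤ pd (1 - (ε m:ℂ)) (1 - (ε m:ℂ) * Complex.exp (Complex.I * θ₁)) := pd_nonneg _ _
        have := mul_le_mul hsmm hW (by norm_num)
          (le_trans (by positivity) hsmm)
        calc δ = (|Real.sin θ₁|/2) * (3/4) := by rw [hδdef]; ring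
          _ ≤ _ := this
      · rw [Finset.erase_eq_of_notMem hmF] at hW
        have hs1 : |Real.sin θ₁| ≤ 1 := abs_le.mpr ⟨Real.neg_one_le_sin θ₁, Real.sin_le_one θ₁⟩
        refine le_trans ?_ hW
        rw [hδdef]; nlinarith
    -- the complex side
    set Z : ℂ := 1 - (ε m:ℂ) * Complex.exp (Complex.I * θ₁) with hZdef
    set bf : ℕ → ℂ := fun n => (((1 - ε n : ℝ) : ℂ) - Z) / (1 - ((1 - ε n : ℝ) : ℂ) * Z) with hbfdef
    have hsin0 : Real.sin θ₁ ≠ 0 := by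
      intro h; rw [h] at hsin; simp at hsin
    have heim : (Complex.exp (Complex.I * θ₁)).im = Real.sin θ₁ := by
      rw [exp_I_theta]; simp [Complex.sin_ofReal_re]
    have here : (Complex.exp (Complex.I * θ₁)).re = Real.cos θ₁ := by
      rw [exp_I_theta]; simp [Complex.cos_ofReal_re]
    have hzim : Z.im = -(ε m * Real.sin θ₁) := by
      rw [hZdef]; simp [heim]
    have hzre : Z.re = 1 - ε m * Real.cos θ₁ := by
      rw [hZdef]; simp [here]
    have hzim0 : Z.im ≠ 0 := by
      rw [hzim]
      exact neg_ne_zero.mpr (mul_ne_zero (ne_of_gt (hε0 m)) hsin0)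
    have hns : Complex.normSq Z = 1 - 2*(ε m)*Real.cos θ₁ + (ε m)^2 := by
      rw [Complex.normSq_apply, hzre, hzim]
      linear_combination (ε m)^2 * (Real.sin_sq_add_cos_sq θ₁)
    have habs_z_lt : ‖Z‖ < 1 := by
      have habs2 : (‖Z‖)^2 < 1 := by
        rw [Complex.sq_norm, hns]
        nlinarith [hε0 m]
      by_contra hcon
      push_neg at hcon
      have h4 := pow_le_pow_left₀ (by norm_num : (0:ℝ) ≤ 1) hcon 2
      rw [one_pow] at h4
      linarith
    have h3 : 0 < 1 - ‖Z‖ := by linarith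
    have hden_ne : ∀ n, (1 - ((1 - ε n : ℝ) : ℂ) * Z) ≠ 0 := by
      intro n hcontra
      have him : (1 - ((1 - ε n : ℝ) : ℂ) * Z).im = -((1 - ε n) * Z.im) := by
        simp
      rw [hcontra] at him
      simp at him
      rcases him with h | h
      · linarith [hε1 n]
      · exact hzim0 h
    have hnum_ne : ∀ n, (((1 - ε n : ℝ) : ℂ) - Z) ≠ 0 := by
      intro n hcontra
      have him : (((1 - ε n : ℝ) : ℂ) - Z).im = -Z.im := by simp
      rw [hcontra] at him
      simp at him
      exact hzim0 him
    have hbf_ne : ∀ n, bf n ≠ 0 := fun n => div_ne_zero (hnum_ne n) (hden_ne n)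
    have hbden : ∀ n, 1 - ‖Z‖ ≤ ‖1 - ((1 - ε n : ℝ) : ℂ) * Z‖ := by
      intro n
      have h5 : ‖((1 - ε n : ℝ) : ℂ) * Z‖ ≤ ‖Z‖ := by
        rw [norm_mul, Complex.norm_real, Real.norm_eq_abs]
        have h6 : |1 - ε n| ≤ 1 := abs_le.mpr ⟨by linarith [hε1 n], by linarith [hε0 n]⟩
        nlinarith [norm_nonneg Z]
      have h7 := norm_sub_norm_le (1:ℂ) (((1 - ε n : ℝ) : ℂ) * Z)
      rw [norm_one] at h7
      linarith
    have hbfm1 : ∀ n, ‖bf n - 1‖ ≤ (2/(1 - ‖Z‖)) * ε n := by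
      intro n
      have hid : bf n - 1 = (-(ε n:ℂ) * (1 + Z))/(1 - ((1 - ε n : ℝ) : ℂ) * Z) := by
        rw [hbfdef]
        simp only []
        rw [div_sub_one (hden_ne n)]
        congr 1
        push_cast
        ring
      rw [hid, norm_div, norm_mul]
      have h1' : ‖-(ε n:ℂ)‖ = ε n := by
        rw [norm_neg, Complex.norm_real, Real.norm_eq_abs, abs_of_pos (hε0 n)]
      have h2' : ‖1 + Z‖ ≤ 2 := by
        refine le_trans (norm_add_le 1 Z) ?_
        rw [norm_one]; linarith
      calc ‖-(ε n:ℂ)‖ * ‖1 + Z‖ / ‖1 - ((1 - ε n : ℝ) : ℂ) * Z‖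
          ≤ (ε n * 2) / (1 - ‖Z‖) := by
            apply div_le_div₀ (mul_nonneg (hε0 n).le (by norm_num)) ?_ h3 (hbden n)
            rw [h1']
            exact mul_le_mul_of_nonneg_left h2' (hε0 n).le
        _ = (2/(1 - ‖Z‖)) * ε n := by ring
    have hlog_sum : Summable (fun n => Complex.log (bf n)) := by
      apply Summable.of_norm_bounded_eventually_nat
        (g := fun n => 3/2 * ((2/(1 - ‖Z‖)) * ε n)) ((hsumε.mul_left _).mul_left _)
      have hev' : ∀ᶠ n in atTop, (2/(1 - ‖Z‖)) * ε n ≤ 1/2 := by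
        have htd : Tendsto (fun n => (2/(1 - ‖Z‖)) * ε n) atTop (nhds 0) := by
          simpa using hlim.const_mul (2/(1 - ‖Z‖))
        exact htd.eventually (eventually_le_nhds (by norm_num))
      filter_upwards [hev'] with n hn
      have hb1 : ‖bf n - 1‖ ≤ 1/2 := by
        exact le_trans (hbfm1 n) hn
      have hlb := Complex.norm_log_one_add_half_le_self hb1
      have heq : (1 : ℂ) + (bf n - 1) = bf n := by ring
      rw [heq] at hlb
      refine le_trans hlb ?_
      nlinarith [hbfm1 n]
    have hmult : Multipliable bf :=
      Complex.multipliable_of_summable_log hlog_sum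
    have habsB : ‖B ε Z‖ = ∏' n, ‖bf n‖ := by
      rw [show B ε Z = ∏' n, bf n from rfl]
      exact hmult.norm_tprod
    have habs_eq : ∀ n, ‖bf n‖ = pd (1 - (ε n:ℂ)) Z := by
      intro n
      unfold pd
      rw [hbfdef]
      simp only []
      rw [norm_div]
      congr 2
      · push_cast; ring
      · simp only [map_sub, map_one, Complex.conj_ofReal]
        push_cast; ring
    have htpeq : ∏' n, ‖bf n‖ = ∏' n, pd (1 - (ε n:ℂ)) Z := tprod_congr habs_eq
    constructor
    · calc δ ≤ ∏' n, pd (1 - (ε n:ℂ)) Z :=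
            le_tprod01 _ (fun n => pd_nonneg _ _) (fun n => hs_le_one n) δ hprod
        _ = ‖B ε Z‖ := by rw [habsB, htpeq]
    · rw [habsB, htpeq]
      have := tprod01_le_prod (fun n => pd (1 - (ε n:ℂ)) Z)
        (fun n => pd_nonneg _ _) (fun n => hs_le_one n) ∅
      simpa using this

  have hgoal := (hev.mono (fun m hm => hm.1))
  refine lt_of_lt_of_le hδ (le_liminf_of_le ?_ hgoal)
  exact isCoboundedUnder_ge_of_eventually_le atTop (hev.mono (fun m hm => hm.2))
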